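/- arXiv:1111.1320 — 2 statements merged into one kernel-verified Lean document; each statement's English description precedes it below -/
import Mathlib

section
/- The odd complete symmetric polynomials h_k satisfy the same relations as the odd elementary symmetric polynomials: (i) h_i h_{2m−i} = h_{2m−i} h_i whenever 1 ≤ i and 2m−i ≤ a; (ii) h_i h_{2m+1−i} + (−1)^i h_{2m+1−i} h_i = (−1)^i h_{i+1} h_{2m−i} + h_{2m−i} h_{i+1} whenever 1 ≤ i and 2m−i ≤ a−1; (iii) h_1 h_{2m} + h_{2m} h_1 = 2 h_{2m+1} whenever 1 < 2m ≤ a−1. Furthermore the mixed relations hold: ε_i h_{2m−i} = h_{2m−i} ε_i whenever 1 ≤ i and 2m−i ≤ a, and ε_i h_{2m+1−i} + (−1)^i h_{2m+1−i} ε_i = (−1)^i ε_{i+1} h_{2m−i} + h_{2m−i} ε_{i+1} whenever 1 ≤ i and 2m−i ≤ a−1. -/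
open scoped BigOperators

/-- The defining anticommutation relations of the odd polynomial ring. -/
inductive OddRel (a : ℕ) : FreeAlgebra ℤ (Fin a) → FreeAlgebra ℤ (Fin a) → Prop
  | anticomm (i j : Fin a) (h : i ≠ j) :
      OddRel a (FreeAlgebra.ι ℤ i * FreeAlgebra.ι ℤ j)
        (-(FreeAlgebra.ι ℤ j * FreeAlgebra.ι ℤ i))

/-- The ring of odd polynomials in `a` variables over `ℤ`. -/
abbrev OPol (a : ℕ) : Type := RingQuot (OddRel a)

/-- The variable `x_{i+1}` (`0`-based index). -/
noncomputable def OX {a : ℕ} (i : Fin a) : OPol a :=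
  RingQuot.mkRingHom (OddRel a) (FreeAlgebra.ι ℤ i)

/-- The variable `x_i` (`1`-based index), `0` if out of range. -/
noncomputable def xv (a : ℕ) (i : ℕ) : OPol a :=
  if h : 1 ≤ i ∧ i ≤ a then OX ⟨i - 1, by omega⟩ else 0

/-- The signed variable `x̃_i = (−1)^{i−1} x_i` (`0`-based index, so the sign is `(−1)^i`). -/
noncomputable def xt (a : ℕ) (i : Fin a) : OPol a := (-1 : OPol a) ^ (i : ℕ) * OX i

/-- Odd elementary symmetric polynomial `ε_k`. -/
noncomputable def eps (a k : ℕ) : OPol a :=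
  ∑ t ∈ Finset.powersetCard k (Finset.univ : Finset (Fin a)),
    ((t.sort (· ≤ ·)).map (xt a)).prod

/-- Odd complete symmetric polynomial `h_k`. -/
noncomputable def hp (a k : ℕ) : OPol a :=
  ∑ σ : Sym (Fin a) k, (((σ : Multiset (Fin a)).sort (· ≤ ·)).map (xt a)).prod

/-- The ordered monomial `x_1^{c_1} ⋯ x_a^{c_a}`. -/
noncomputable def xmon {a : ℕ} (c : Fin a → ℕ) : OPol a :=
  ((List.finRange a).map fun i => OX i ^ c i).prod

/-- The staircase monomial `x^{δ_a} = x_1^{a−1} x_2^{a−2} ⋯ x_a^0`. -/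
noncomputable def xdelta (a : ℕ) : OPol a :=
  ((List.finRange a).map fun i => OX i ^ (a - 1 - (i : ℕ))).prod

/-- Composite of the operators `d i` along a word, leftmost letter acting last (outermost). -/
noncomputable def dword {a : ℕ} (d : ℕ → OPol a →+ OPol a) : List ℕ → (OPol a →+ OPol a)
  | [] => AddMonoidHom.id _
  | i :: l => (d i).comp (dword d l)

/-- The word `1, (2,1), (3,2,1), …, (a−1,…,2,1)` for the longest element, so that
`dword d (DList a) = ∂_1∘(∂_2∘∂_1)∘⋯∘(∂_{a−1}∘⋯∘∂_1) = D_a`. -/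
def DList (a : ℕ) : List ℕ :=
  ((List.range a).map fun b => (List.range b).reverse.map (· + 1)).flatten

/-- Left multiplication by `f` as a `ℤ`-linear endomorphism. -/
noncomputable def mulL {a : ℕ} (f : OPol a) : Module.End ℤ (OPol a) :=
  (AddMonoidHom.mulLeft f).toIntLinearMap

/-- The generators of the odd nilHecke ring inside `End_ℤ(OPol a)`. -/
noncomputable def onhGens (a : ℕ) (d : ℕ → OPol a →+ OPol a) :
    Set (Module.End ℤ (OPol a)) :=
  {T | (∃ i : Fin a, T = mulL (OX i)) ∨
    (∃ i : ℕ, 1 ≤ i ∧ i + 1 ≤ a ∧ T = (d i).toIntLinearMap)}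

/-- The simple transposition `s_i` (`1`-based) of `{1,…,a}`. -/
def sperm (a : ℕ) (i : ℕ) : Equiv.Perm (Fin a) :=
  if h : 1 ≤ i ∧ i + 1 ≤ a then Equiv.swap ⟨i - 1, by omega⟩ ⟨i, by omega⟩ else 1

/-- The permutation associated to a word in the simple transpositions. -/
def wordPerm (a : ℕ) (l : List ℕ) : Equiv.Perm (Fin a) := (l.map (sperm a)).prod

/-- Evaluation of an (even) multivariate polynomial at the squared variables `x_1², …, x_a²`. -/
noncomputable def sqEval {a : ℕ} (p : MvPolynomial (Fin a) ℤ) : OPol a :=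
  ∑ m ∈ p.support,
    MvPolynomial.coeff m p • ((List.finRange a).map fun i => OX i ^ (2 * m i)).prod

/-- The odd symmetrization operator `S(f) = (−1)^{C(a,3)} w₀(D_a(f·x^{δ_a}))`. -/
noncomputable def oddSymzn (a : ℕ) (d : ℕ → OPol a →+ OPol a) (W0 : OPol a →+* OPol a)
    (f : OPol a) : OPol a :=
  (-1 : OPol a) ^ Nat.choose a 3 * W0 (dword d (DList a) (f * xdelta a))

/-- The odd Schur polynomial `s_α = (−1)^{C(a,3)} w₀(D_a(x^α·x^{δ_a}))`. -/
noncomputable def schurP (a : ℕ) (d : ℕ → OPol a →+ OPol a) (W0 : OPol a →+* OPol a)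
    (α : Fin a → ℕ) : OPol a :=
  (-1 : OPol a) ^ Nat.choose a 3 * W0 (dword d (DList a) (xmon α * xdelta a))

/-- The 0-Hecke generator `∂̄_r = x_r ∘ ∂_r`. -/
noncomputable def dbar (a : ℕ) (d : ℕ → OPol a →+ OPol a) (r : ℕ) : OPol a →+ OPol a :=
  (AddMonoidHom.mulLeft (xv a r)).comp (d r)

/-- The `ℤ`-span of products of exactly `n` variables: the degree-`2n` component of `OPol a`. -/
def degComp (a n : ℕ) : Submodule ℤ (OPol a) :=
  Submodule.span ℤ {f : OPol a | ∃ l : List (Fin a), l.length = n ∧ f = (l.map OX).prod}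

/-- Odd Schubert polynomial `𝔰_w = ∂_{w⁻¹w₀}(x^{δ_a})` for a fixed choice `red` of
reduced expressions. -/
noncomputable def schubert (a : ℕ) (d : ℕ → OPol a →+ OPol a)
    (red : Equiv.Perm (Fin a) → List ℕ) (w : Equiv.Perm (Fin a)) : OPol a :=
  dword d (red (w⁻¹ * Fin.revPerm)) (xdelta a)

/-- Product of odd elementary symmetric polynomials along the parts of a partition,
in non-increasing order. -/
noncomputable def epsPart (a : ℕ) {n : ℕ} (p : Nat.Partition n) : OPol a :=
  (((p.parts.sort (· ≤ ·)).reverse).map (eps a)).prod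

section Helpers
variable {R : Type*} [Ring R]

lemma gen_sq_comm {A B : R} (h : A * B = -(B * A)) : (A * A) * B = B * (A * A) := by
  rw [mul_assoc, h, mul_neg, ← mul_assoc, h]; noncomm_ring

lemma gen_conj_anti {X Y c d : R} (hc : ∀ r : R, c * r = r * c)
    (hd : ∀ r : R, d * r = r * d) (h : X * Y = -(Y * X)) :
    (c * X) * (d * Y) = -((d * Y) * (c * X)) := by
  calc (c * X) * (d * Y) = c * ((X * d) * Y) := by noncomm_ring
    _ = c * ((d * X) * Y) := by rw [← hd X]
    _ = (c * d) * (X * Y) := by noncomm_ring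
    _ = (d * c) * (X * Y) := by rw [hc d]
    _ = (d * c) * -(Y * X) := by rw [h]
    _ = -((d * (c * Y)) * X) := by noncomm_ring
    _ = -((d * (Y * c)) * X) := by rw [hc Y]
    _ = -((d * Y) * (c * X)) := by noncomm_ring

lemma gen_conj_sq {X c : R} (hc : ∀ r : R, c * r = r * c) (hcc : c * c = 1) :
    (c * X) * (c * X) = X * X := by
  rw [mul_assoc, ← mul_assoc X c X, ← hc X, mul_assoc c X X, ← mul_assoc, hcc, one_mul]

lemma gen_neg_one_sq (n : ℕ) : (-1 : R) ^ n * (-1 : R) ^ n = 1 := by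
  rw [← pow_add]
  exact Even.neg_one_pow ⟨n, rfl⟩

lemma gen_zero_anti : (0 : R) * (0 : R) = -((0:R) * 0) := by simp
lemma gen_zero_anti_l (A : R) : (0 : R) * A = -(A * (0:R)) := by simp
lemma gen_zero_anti_r (A : R) : A * (0 : R) = -((0:R) * A) := by simp

end Helpers

lemma negpow_comm {a : ℕ} (n : ℕ) (r : OPol a) :
    (-1 : OPol a) ^ n * r = r * (-1 : OPol a) ^ n :=
  ((Commute.neg_one_left r).pow_left n).eq

lemma OX_anticomm {a : ℕ} {i j : Fin a} (h : i ≠ j) : OX i * OX j = -(OX j * OX i) := by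
  rw [OX, OX, ← map_mul, ← map_mul, ← map_neg]
  exact RingQuot.mkRingHom_rel (OddRel.anticomm i j h)

lemma xt_anticomm {a : ℕ} {i j : Fin a} (h : i ≠ j) :
    xt a i * xt a j = -(xt a j * xt a i) :=
  gen_conj_anti (negpow_comm _) (negpow_comm _) (OX_anticomm h)

lemma xt_sq {a : ℕ} (i : Fin a) : xt a i * xt a i = OX i * OX i :=
  gen_conj_sq (negpow_comm _) (gen_neg_one_sq _)

lemma OXsq_comm {a : ℕ} (i : Fin a) (f : OPol a) :
    (OX i * OX i) * f = f * (OX i * OX i) := by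
  obtain ⟨g, rfl⟩ := RingQuot.mkRingHom_surjective (OddRel a) f
  refine FreeAlgebra.induction ℤ (Fin a)
    (motive := fun g => (OX i * OX i) * RingQuot.mkRingHom (OddRel a) g =
      RingQuot.mkRingHom (OddRel a) g * (OX i * OX i)) ?_ ?_ ?_ ?_ g
  · intro r
    rw [eq_intCast (algebraMap ℤ (FreeAlgebra ℤ (Fin a))) r, map_intCast]
    exact ((Int.cast_commute r (OX i * OX i)).eq).symm
  · intro x
    show (OX i * OX i) * OX x = OX x * (OX i * OX i)
    by_cases hx : x = i
    · subst hx; noncomm_ring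
    · exact gen_sq_comm (OX_anticomm (fun hh => hx hh.symm))
  · intro p q hp hq
    rw [map_mul, ← mul_assoc, hp, mul_assoc, hq, ← mul_assoc]
  · intro p q hp hq
    rw [map_add, mul_add, add_mul, hp, hq]

/-- the variables in reversed order: `yw a n = xt (a-n-1)`, zero if out of range -/
noncomputable def yw (a : ℕ) (n : ℕ) : OPol a :=
  if h : n < a then xt a ⟨a - n - 1, by omega⟩ else 0

lemma yw_anticomm {a : ℕ} {m n : ℕ} (h : m ≠ n) :
    yw a m * yw a n = -(yw a n * yw a m) := by
  rw [yw, yw]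
  split_ifs with h1 h2 h2
  · exact xt_anticomm (by simp only [ne_eq, Fin.mk.injEq]; omega)
  · exact gen_zero_anti_r _
  · exact gen_zero_anti_l _
  · exact gen_zero_anti

lemma ywsq_comm {a : ℕ} (n : ℕ) (f : OPol a) :
    (yw a n * yw a n) * f = f * (yw a n * yw a n) := by
  rw [yw]
  split_ifs with h1
  · rw [xt_sq]; exact OXsq_comm _ f
  · simp

section Abstract
variable (R : Type*) [Ring R]

/-- sign (-1)^i for integer i -/
noncomputable def sgn (i : ℤ) : R := if Even i then 1 else -1

variable {R}

lemma sgn_one {i : ℤ} (h : i % 2 = 0) : sgn R i = 1 := by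
  simp [sgn, Int.even_iff.mpr h]

lemma sgn_negOne {i : ℤ} (h : i % 2 = 1) : sgn R i = -1 := by
  have : ¬ Even i := by rw [Int.even_iff]; omega
  simp [sgn, this]

lemma sgn_natCast (n : ℕ) : sgn R (n : ℤ) = (-1 : R) ^ n := by
  rcases Nat.even_or_odd n with h | h
  · obtain ⟨k, hk⟩ := h
    rw [sgn_one (by omega : (n:ℤ) % 2 = 0), Even.neg_one_pow ⟨k, hk⟩]
  · obtain ⟨k, hk⟩ := h
    rw [sgn_negOne (by omega : (n:ℤ) % 2 = 1), Odd.neg_one_pow ⟨k, hk⟩]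

/-- commutation moves -/
lemma mv_pos {y A : R} (h : y * A = A * y) (B : R) : A * (y * B) = y * (A * B) := by
  rw [← mul_assoc, ← h, mul_assoc]

lemma mv_neg {y A : R} (h : y * A = -(A * y)) (B : R) : A * (y * B) = -(y * (A * B)) := by
  have h2 : A * y = -(y * A) := by rw [h, neg_neg]
  rw [← mul_assoc, h2, neg_mul, mul_assoc]

lemma zmv {z : R} (hz : ∀ r : R, z * r = r * z) (A B : R) : A * z * B = A * B * z := by
  rw [mul_assoc, hz B, ← mul_assoc]

/-- two-step integer recursion principle -/
lemma intRec2 {P : ℤ → Prop} (hneg : ∀ i : ℤ, i < 0 → P i)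
    (hstep : ∀ i : ℤ, 0 ≤ i → P (i - 2) → P i) : ∀ i, P i := by
  have key : ∀ n : ℕ, P (n : ℤ) := by
    intro n
    induction n using Nat.strong_induction_on with
    | _ n ih =>
      apply hstep n (by positivity)
      rcases Nat.lt_or_ge n 2 with h | h
      · exact hneg _ (by omega)
      · have : ((n : ℤ) - 2) = ((n - 2 : ℕ) : ℤ) := by omega
        rw [this]; exact ih (n - 2) (by omega)
  intro i
  rcases Int.lt_or_le i 0 with h | h
  · exact hneg i h
  · have : i = ((i.toNat : ℕ) : ℤ) := by omega
    rw [this]; exact key _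

variable (R) in
/-- the relation predicates -/
def M1R (u v : ℤ → R) : Prop := ∀ i j : ℤ, Even (i + j) → u i * v j = v j * u i

variable (R) in
def M2R (u v : ℤ → R) : Prop := ∀ i j : ℤ, Even (i + j) →
  u i * v (j + 1) + sgn R i * (v (j + 1) * u i) =
    sgn R i * (u (i + 1) * v j) + v j * u (i + 1)

variable (R) in
/-- x moves past u i with sign (-1)^i -/
def XC (x : R) (u : ℤ → R) : Prop := ∀ i, x * u i = sgn R i * (u i * x)

/-- z-dilation: Pz u z i = sum_t u (i - 2t) z^t -/
noncomputable def PzA (u : ℤ → R) (z : R) : ℕ → R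
  | 0 => u 0
  | 1 => u 1
  | (n+2) => u (n+2) + PzA u z n * z

noncomputable def Pz (u : ℤ → R) (z : R) (i : ℤ) : R :=
  if 0 ≤ i then PzA u z i.toNat else 0

lemma Pz_neg {u : ℤ → R} {z : R} {i : ℤ} (h : i < 0) : Pz u z i = 0 := by
  rw [Pz, if_neg (by omega)]

lemma Pz_rec {u : ℤ → R} {z : R} (hu : ∀ i : ℤ, i < 0 → u i = 0) (i : ℤ) :
    Pz u z i = u i + Pz u z (i - 2) * z := by
  rcases Int.lt_or_le i 0 with h | h
  · rw [Pz_neg h, Pz_neg (by omega), hu i h, zero_mul, add_zero]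
  rcases Int.lt_or_le i 2 with h2 | h2
  · rw [Pz_neg (by omega : i - 2 < 0), zero_mul, add_zero, Pz, if_pos h]
    interval_cases i
    · show PzA u z 0 = u 0; rfl
    · show PzA u z 1 = u 1; rfl
  · rw [Pz, Pz, if_pos h, if_pos (by omega)]
    have e1 : i.toNat = (i - 2).toNat + 2 := by omega
    rw [e1, PzA]
    congr 2
    omega

lemma sgn_mod {i j : ℤ} (h : i % 2 = j % 2) : sgn R i = sgn R j := by
  rcases Int.emod_two_eq_zero_or_one i with h0 | h0
  · rw [sgn_one h0, sgn_one (by omega)]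
  · rw [sgn_negOne h0, sgn_negOne (by omega)]

lemma even_shift {i j i' j' : ℤ} (h : Even (i + j)) (h2 : (i + j) % 2 = (i' + j') % 2) :
    Even (i' + j') := by
  rw [Int.even_iff] at h ⊢; omega

variable {u v : ℤ → R} {y z x : R}

lemma step_M1 (h1 : M1R R u v) (h2 : M2R R u v) (hyu : XC R y u) (hyv : XC R y v) :
    M1R R (fun i => u i + y * u (i - 1)) (fun i => v i + y * v (i - 1)) := by
  intro i j hij
  simp only []
  have hij' : (i + j) % 2 = 0 := Int.even_iff.mp hij
  have k1 : u i * v j = v j * u i := h1 i j hij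
  have k3 : u (i-1) * v (j-1) = v (j-1) * u (i-1) :=
    h1 (i-1) (j-1) (even_shift hij (by omega))
  have k2 := h2 (i-1) (j-1) (even_shift hij (by omega))
  rw [show (j:ℤ) - 1 + 1 = j by ring, show (i:ℤ) - 1 + 1 = i by ring] at k2
  rcases Int.emod_two_eq_zero_or_one i with hi' | hi'
  · have hj' : j % 2 = 0 := by omega
    have mU : y * u i = u i * y := by rw [hyu i, sgn_one hi', one_mul]
    have mU' : y * u (i-1) = -(u (i-1) * y) := by
      rw [hyu (i-1), sgn_negOne (by omega), neg_one_mul]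
    have mV : y * v j = v j * y := by rw [hyv j, sgn_one hj', one_mul]
    have mV' : y * v (j-1) = -(v (j-1) * y) := by
      rw [hyv (j-1), sgn_negOne (by omega), neg_one_mul]
    rw [sgn_negOne (by omega : (i-1) % 2 = 1), neg_one_mul, neg_one_mul] at k2
    -- k2 : u (i-1) * v j + -(v j * u (i-1)) = -(u i * v (j-1)) + v (j-1) * u i
    have k2' : u (i-1) * v j = v j * u (i-1) - u i * v (j-1) + v (j-1) * u i := by
      calc u (i-1) * v j = (u (i-1) * v j + -(v j * u (i-1))) + v j * u (i-1) := by abel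
        _ = (-(u i * v (j-1)) + v (j-1) * u i) + v j * u (i-1) := by rw [k2]
        _ = v j * u (i-1) - u i * v (j-1) + v (j-1) * u i := by abel
    simp only [mul_add, add_mul, mul_assoc]
    rw [mv_pos mU (v (j-1)), mv_neg mU' (v (j-1)), mv_pos mV (u (i-1)), mv_neg mV' (u (i-1))]
    rw [k1, k2', k3]
    noncomm_ring
  · have hj' : j % 2 = 1 := by omega
    have mU : y * u i = -(u i * y) := by rw [hyu i, sgn_negOne hi', neg_one_mul]
    have mU' : y * u (i-1) = u (i-1) * y := by
      rw [hyu (i-1), sgn_one (by omega), one_mul]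
    have mV : y * v j = -(v j * y) := by rw [hyv j, sgn_negOne hj', neg_one_mul]
    have mV' : y * v (j-1) = v (j-1) * y := by
      rw [hyv (j-1), sgn_one (by omega), one_mul]
    rw [sgn_one (by omega : (i-1) % 2 = 0), one_mul, one_mul] at k2
    -- k2 : u (i-1) * v j + v j * u (i-1) = u i * v (j-1) + v (j-1) * u i
    have k2' : u (i-1) * v j = -(v j * u (i-1)) + u i * v (j-1) + v (j-1) * u i := by
      calc u (i-1) * v j = (u (i-1) * v j + v j * u (i-1)) + -(v j * u (i-1)) := by abel
        _ = (u i * v (j-1) + v (j-1) * u i) + -(v j * u (i-1)) := by rw [k2]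
        _ = -(v j * u (i-1)) + u i * v (j-1) + v (j-1) * u i := by abel
    simp only [mul_add, add_mul, mul_assoc]
    rw [mv_neg mU (v (j-1)), mv_pos mU' (v (j-1)), mv_neg mV (u (i-1)), mv_pos mV' (u (i-1))]
    rw [k1, k2', k3]
    noncomm_ring

lemma step_M2 (h1 : M1R R u v) (h2 : M2R R u v) (hyu : XC R y u) (hyv : XC R y v) :
    M2R R (fun i => u i + y * u (i - 1)) (fun i => v i + y * v (i - 1)) := by
  intro i j hij
  simp only []
  rw [show (j:ℤ) + 1 - 1 = j by ring, show (i:ℤ) + 1 - 1 = i by ring]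
  have hij' : (i + j) % 2 = 0 := Int.even_iff.mp hij
  have k1 := h2 i j hij
  have k2 : u (i-1) * v (j+1) = v (j+1) * u (i-1) :=
    h1 (i-1) (j+1) (even_shift hij (by omega))
  have k3 : u (i+1) * v (j-1) = v (j-1) * u (i+1) :=
    h1 (i+1) (j-1) (even_shift hij (by omega))
  have k4 := h2 (i-1) (j-1) (even_shift hij (by omega))
  rw [show (j:ℤ) - 1 + 1 = j by ring, show (i:ℤ) - 1 + 1 = i by ring] at k4
  rcases Int.emod_two_eq_zero_or_one i with hi' | hi'
  · have hj' : j % 2 = 0 := by omega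
    have mU : y * u i = u i * y := by rw [hyu i, sgn_one hi', one_mul]
    have mU' : y * u (i-1) = -(u (i-1) * y) := by
      rw [hyu (i-1), sgn_negOne (by omega), neg_one_mul]
    have mUp : y * u (i+1) = -(u (i+1) * y) := by
      rw [hyu (i+1), sgn_negOne (by omega), neg_one_mul]
    have mV : y * v j = v j * y := by rw [hyv j, sgn_one hj', one_mul]
    have mV' : y * v (j-1) = -(v (j-1) * y) := by
      rw [hyv (j-1), sgn_negOne (by omega), neg_one_mul]
    have mVp : y * v (j+1) = -(v (j+1) * y) := by
      rw [hyv (j+1), sgn_negOne (by omega), neg_one_mul]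
    rw [sgn_one hi', one_mul, one_mul] at k1 ⊢
    rw [sgn_negOne (by omega : (i-1) % 2 = 1), neg_one_mul, neg_one_mul] at k4
    have k1' : u i * v (j+1) = -(v (j+1) * u i) + u (i+1) * v j + v j * u (i+1) := by
      calc u i * v (j+1) = (u i * v (j+1) + v (j+1) * u i) + -(v (j+1) * u i) := by abel
        _ = (u (i+1) * v j + v j * u (i+1)) + -(v (j+1) * u i) := by rw [k1]
        _ = -(v (j+1) * u i) + u (i+1) * v j + v j * u (i+1) := by abel
    have k4' : u (i-1) * v j = v j * u (i-1) - u i * v (j-1) + v (j-1) * u i := by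
      calc u (i-1) * v j = (u (i-1) * v j + -(v j * u (i-1))) + v j * u (i-1) := by abel
        _ = (-(u i * v (j-1)) + v (j-1) * u i) + v j * u (i-1) := by rw [k4]
        _ = v j * u (i-1) - u i * v (j-1) + v (j-1) * u i := by abel
    simp only [mul_add, add_mul, mul_assoc]
    rw [mv_pos mU (v j), mv_neg mU' (v j), mv_neg mVp (u (i-1)), mv_pos mV (u (i-1)),
      mv_neg mUp (v (j-1)), mv_pos mU (v (j-1)), mv_pos mV (u i), mv_neg mV' (u i)]
    rw [k1', k2, k3, k4']
    noncomm_ring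
  · have hj' : j % 2 = 1 := by omega
    have mU : y * u i = -(u i * y) := by rw [hyu i, sgn_negOne hi', neg_one_mul]
    have mU' : y * u (i-1) = u (i-1) * y := by
      rw [hyu (i-1), sgn_one (by omega), one_mul]
    have mUp : y * u (i+1) = u (i+1) * y := by
      rw [hyu (i+1), sgn_one (by omega), one_mul]
    have mV : y * v j = -(v j * y) := by rw [hyv j, sgn_negOne hj', neg_one_mul]
    have mV' : y * v (j-1) = v (j-1) * y := by
      rw [hyv (j-1), sgn_one (by omega), one_mul]
    have mVp : y * v (j+1) = v (j+1) * y := by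
      rw [hyv (j+1), sgn_one (by omega), one_mul]
    rw [sgn_negOne hi', neg_one_mul, neg_one_mul] at k1 ⊢
    rw [sgn_one (by omega : (i-1) % 2 = 0), one_mul, one_mul] at k4
    have k1' : u i * v (j+1) = v (j+1) * u i - u (i+1) * v j + v j * u (i+1) := by
      calc u i * v (j+1) = (u i * v (j+1) + -(v (j+1) * u i)) + v (j+1) * u i := by abel
        _ = (-(u (i+1) * v j) + v j * u (i+1)) + v (j+1) * u i := by rw [k1]
        _ = v (j+1) * u i - u (i+1) * v j + v j * u (i+1) := by abel
    have k4' : u (i-1) * v j = -(v j * u (i-1)) + u i * v (j-1) + v (j-1) * u i := by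
      calc u (i-1) * v j = (u (i-1) * v j + v j * u (i-1)) + -(v j * u (i-1)) := by abel
        _ = (u i * v (j-1) + v (j-1) * u i) + -(v j * u (i-1)) := by rw [k4]
        _ = -(v j * u (i-1)) + u i * v (j-1) + v (j-1) * u i := by abel
    simp only [mul_add, add_mul, mul_assoc]
    rw [mv_neg mU (v j), mv_pos mU' (v j), mv_pos mVp (u (i-1)), mv_neg mV (u (i-1)),
      mv_pos mUp (v (j-1)), mv_neg mU (v (j-1)), mv_neg mV (u i), mv_pos mV' (u i)]
    rw [k1', k2, k3, k4']
    noncomm_ring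

lemma Pz_zero_eq {u : ℤ → R} {z : R} : Pz u z 0 = u 0 := by
  simp [Pz, PzA]

lemma trans_right_M1 (h1 : M1R R u v) (hz : ∀ r : R, z * r = r * z)
    (hv : ∀ i : ℤ, i < 0 → v i = 0) : M1R R u (Pz v z) := by
  have main : ∀ j : ℤ, ∀ i : ℤ, Even (i + j) → u i * Pz v z j = Pz v z j * u i := by
    refine intRec2 (fun j hj => ?_) (fun j _ ih => ?_)
    · intro i _; rw [Pz_neg hj, mul_zero, zero_mul]
    · intro i hij
      rw [Pz_rec hv j, mul_add, add_mul, h1 i j hij]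
      congr 1
      rw [← mul_assoc, ih i (even_shift hij (by omega)), mul_assoc, ← hz (u i), ← mul_assoc]
  exact fun i j h => main j i h

lemma trans_right_M2 (h2 : M2R R u v) (hz : ∀ r : R, z * r = r * z)
    (hv : ∀ i : ℤ, i < 0 → v i = 0) : M2R R u (Pz v z) := by
  have main : ∀ j : ℤ, ∀ i : ℤ, Even (i + j) →
      u i * Pz v z (j + 1) + sgn R i * (Pz v z (j + 1) * u i) =
        sgn R i * (u (i + 1) * Pz v z j) + Pz v z j * u (i + 1) := by
    refine intRec2 (fun j hj => ?_) (fun j hj0 ih => ?_)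
    · intro i hij
      rcases Int.lt_or_le j (-1) with h' | h'
      · rw [Pz_neg hj, Pz_neg (by omega)]
        simp
      · have hj1 : j = -1 := by omega
        subst hj1
        have inst := h2 i (-1) hij
        rw [show (-1 : ℤ) + 1 = 0 by ring, hv (-1) (by omega)] at inst
        rw [show (-1 : ℤ) + 1 = 0 by ring, Pz_zero_eq, Pz_neg (by omega)]
        simpa using inst
    · intro i hij
      have inst := h2 i j hij
      have ihi := ih i (even_shift hij (by omega))
      rw [show j - 2 + 1 = j - 1 by ring] at ihi
      rw [Pz_rec hv (j + 1), Pz_rec hv j, show j + 1 - 2 = j - 1 by ring]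
      refine sub_eq_zero.mp ?_
      have expand : u i * (v (j+1) + Pz v z (j-1) * z) +
            sgn R i * ((v (j+1) + Pz v z (j-1) * z) * u i) -
            (sgn R i * (u (i+1) * (v j + Pz v z (j-2) * z)) +
              (v j + Pz v z (j-2) * z) * u (i+1)) =
          (u i * v (j+1) + sgn R i * (v (j+1) * u i) -
            (sgn R i * (u (i+1) * v j) + v j * u (i+1))) +
          (u i * Pz v z (j-1) + sgn R i * (Pz v z (j-1) * u i) -
            (sgn R i * (u (i+1) * Pz v z (j-2)) + Pz v z (j-2) * u (i+1))) * z := by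
        simp only [mul_add, add_mul]
        rw [zmv hz (Pz v z (j-1)) (u i), zmv hz (Pz v z (j-2)) (u (i+1))]
        noncomm_ring
      rw [expand, sub_eq_zero.mpr inst, sub_eq_zero.mpr ihi, zero_mul, add_zero]
  exact fun i j h => main j i h

lemma trans_left_M1 (h1 : M1R R u v) (hz : ∀ r : R, z * r = r * z)
    (hu : ∀ i : ℤ, i < 0 → u i = 0) : M1R R (Pz u z) v := by
  have main : ∀ i : ℤ, ∀ j : ℤ, Even (i + j) → Pz u z i * v j = v j * Pz u z i := by
    refine intRec2 (fun i hi => ?_) (fun i _ ih => ?_)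
    · intro j _; rw [Pz_neg hi, mul_zero, zero_mul]
    · intro j hij
      rw [Pz_rec hu i, add_mul, mul_add, h1 i j hij]
      congr 1
      rw [zmv hz (Pz u z (i-2)) (v j), ih j (even_shift hij (by omega)), ← mul_assoc]
  exact fun i j h => main i j h

lemma trans_left_M2 (h2 : M2R R u v) (hz : ∀ r : R, z * r = r * z)
    (hu : ∀ i : ℤ, i < 0 → u i = 0) : M2R R (Pz u z) v := by
  have main : ∀ i : ℤ, ∀ j : ℤ, Even (i + j) →
      Pz u z i * v (j + 1) + sgn R i * (v (j + 1) * Pz u z i) =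
        sgn R i * (Pz u z (i + 1) * v j) + v j * Pz u z (i + 1) := by
    refine intRec2 (fun i hi => ?_) (fun i hi0 ih => ?_)
    · intro j hij
      rcases Int.lt_or_le i (-1) with h' | h'
      · rw [Pz_neg hi, Pz_neg (by omega)]
        simp
      · have hi1 : i = -1 := by omega
        subst hi1
        have inst := h2 (-1) j hij
        rw [show (-1 : ℤ) + 1 = 0 by ring, hu (-1) (by omega)] at inst
        rw [show (-1 : ℤ) + 1 = 0 by ring, Pz_zero_eq, Pz_neg (by omega)]
        simpa using inst
    · intro j hij
      have inst := h2 i j hij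
      have ihi := ih j (even_shift hij (by omega))
      rw [show i - 2 + 1 = i - 1 by ring] at ihi
      rw [Pz_rec hu (i + 1), Pz_rec hu i, show i + 1 - 2 = i - 1 by ring]
      refine sub_eq_zero.mp ?_
      have hsg : sgn R (i - 2) = sgn R i := sgn_mod (by omega)
      rw [← hsg] at inst
      have expand : (u i + Pz u z (i-2) * z) * v (j+1) +
            sgn R (i-2) * (v (j+1) * (u i + Pz u z (i-2) * z)) -
            (sgn R (i-2) * ((u (i+1) + Pz u z (i-1) * z) * v j) +
              v j * (u (i+1) + Pz u z (i-1) * z)) =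
          (u i * v (j+1) + sgn R (i-2) * (v (j+1) * u i) -
            (sgn R (i-2) * (u (i+1) * v j) + v j * u (i+1))) +
          (Pz u z (i-2) * v (j+1) + sgn R (i-2) * (v (j+1) * Pz u z (i-2)) -
            (sgn R (i-2) * (Pz u z (i-1) * v j) + v j * Pz u z (i-1))) * z := by
        simp only [mul_add, add_mul]
        rw [zmv hz (Pz u z (i-2)) (v (j+1)), zmv hz (Pz u z (i-1)) (v j)]
        noncomm_ring
      rw [← hsg]
      rw [expand, sub_eq_zero.mpr inst, sub_eq_zero.mpr (hsg ▸ ihi), zero_mul, add_zero]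
  exact main

lemma xc_step (hxu : XC R x u) (hxy : x * y = -(y * x)) :
    XC R x (fun i => u i + y * u (i - 1)) := by
  intro i
  simp only []
  rcases Int.emod_two_eq_zero_or_one i with hi | hi
  · have m1 : x * u i = u i * x := by rw [hxu i, sgn_one hi, one_mul]
    have m2 : x * u (i-1) = -(u (i-1) * x) := by
      rw [hxu (i-1), sgn_negOne (by omega), neg_one_mul]
    rw [sgn_one hi, one_mul, mul_add, ← mul_assoc, hxy, m1, neg_mul, mul_assoc, m2]
    noncomm_ring
  · have m1 : x * u i = -(u i * x) := by rw [hxu i, sgn_negOne hi, neg_one_mul]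
    have m2 : x * u (i-1) = u (i-1) * x := by
      rw [hxu (i-1), sgn_one (by omega), one_mul]
    rw [sgn_negOne hi, neg_one_mul, mul_add, ← mul_assoc, hxy, m1, neg_mul, mul_assoc, m2]
    noncomm_ring

lemma xc_trans (hxu : XC R x u) (hxz : x * z = z * x) (hu : ∀ i : ℤ, i < 0 → u i = 0) :
    XC R x (Pz u z) := by
  refine intRec2 (fun i hi => ?_) (fun i _ ih => ?_)
  · rw [Pz_neg hi, mul_zero, zero_mul, mul_zero]
  · rw [Pz_rec hu i, mul_add, hxu i, ← mul_assoc x (Pz u z (i-2)) z, ih,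
      sgn_mod (show (i-2) % 2 = i % 2 by omega),
      mul_assoc (sgn R i) (Pz u z (i-2) * x) z]
    have e2 : Pz u z (i-2) * x * z = Pz u z (i-2) * z * x := by
      rw [mul_assoc, hxz, ← mul_assoc]
    rw [e2]
    noncomm_ring

end Abstract


/-! ### The recursive families -/

noncomputable def Ef (a : ℕ) : ℕ → ℤ → OPol a
  | 0 => fun i => if i = 0 then 1 else 0
  | (n+1) => fun i => Ef a n i + yw a n * Ef a n (i - 1)

noncomputable def Hf (a : ℕ) : ℕ → ℤ → OPol a
  | 0 => fun i => if i = 0 then 1 else 0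
  | (n+1) => fun i =>
      Pz (Hf a n) (yw a n * yw a n) i + yw a n * Pz (Hf a n) (yw a n * yw a n) (i - 1)

lemma Ef_succ (a n : ℕ) : Ef a (n+1) = fun i => Ef a n i + yw a n * Ef a n (i - 1) := rfl

lemma Hf_succ (a n : ℕ) : Hf a (n+1) = fun i =>
    Pz (Hf a n) (yw a n * yw a n) i + yw a n * Pz (Hf a n) (yw a n * yw a n) (i - 1) := rfl

lemma Ef_neg (a : ℕ) : ∀ n, ∀ i : ℤ, i < 0 → Ef a n i = 0 := by
  intro n
  induction n with
  | zero => intro i hi; show (if i = 0 then _ else _) = _; rw [if_neg (by omega)]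
  | succ n ih =>
    intro i hi
    show Ef a n i + yw a n * Ef a n (i - 1) = 0
    rw [ih i hi, ih (i-1) (by omega), mul_zero, add_zero]

lemma Hf_neg (a : ℕ) : ∀ n, ∀ i : ℤ, i < 0 → Hf a n i = 0 := by
  intro n
  induction n with
  | zero => intro i hi; show (if i = 0 then _ else _) = _; rw [if_neg (by omega)]
  | succ n _ =>
    intro i hi
    show Pz (Hf a n) _ i + yw a n * Pz (Hf a n) _ (i - 1) = 0
    rw [Pz_neg hi, Pz_neg (by omega), mul_zero, add_zero]

lemma dzero (a : ℕ) : ∀ i : ℤ, i ≠ 0 → Ef a 0 i = 0 := by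
  intro i hi; show (if i = 0 then _ else _) = _; rw [if_neg hi]

lemma done' (a : ℕ) : Ef a 0 0 = 1 := rfl

lemma dM1 (a : ℕ) : M1R (OPol a) (Ef a 0) (Ef a 0) := by
  intro i j _
  rcases eq_or_ne i 0 with rfl | hi
  · rcases eq_or_ne j 0 with rfl | hj
    · rfl
    · rw [dzero a j hj, mul_zero, zero_mul]
  · rw [dzero a i hi, mul_zero, zero_mul]

lemma dM2 (a : ℕ) : M2R (OPol a) (Ef a 0) (Ef a 0) := by
  intro i j hev
  rw [Int.even_iff] at hev
  rcases eq_or_ne i 0 with rfl | hi0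
  · have h1 : Ef a 0 (j+1) = 0 := dzero a _ (by omega)
    have h2 : Ef a 0 (0+1) = 0 := dzero a _ (by omega)
    rw [h1, h2]
    simp
  · rcases eq_or_ne i (-1) with rfl | him
    · have h1 : Ef a 0 (-1) = 0 := dzero a _ (by omega)
      have h2 : Ef a 0 j = 0 := dzero a _ (by omega)
      rw [h1, h2]
      simp
    · have h1 : Ef a 0 i = 0 := dzero a _ hi0
      have h2 : Ef a 0 (i+1) = 0 := dzero a _ (by omega)
      rw [h1, h2]
      simp

lemma dXC (a : ℕ) (x : OPol a) : XC (OPol a) x (Ef a 0) := by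
  intro i
  rcases eq_or_ne i 0 with rfl | hi
  · rw [done', mul_one, one_mul, sgn_one (by omega), one_mul]
  · rw [dzero a i hi, mul_zero, zero_mul, mul_zero]

lemma HfEf0 (a : ℕ) : Hf a 0 = Ef a 0 := rfl

/-- master invariant -/
lemma master (a : ℕ) : ∀ n : ℕ,
    M1R (OPol a) (Ef a n) (Hf a n) ∧ M2R (OPol a) (Ef a n) (Hf a n) ∧
    M1R (OPol a) (Hf a n) (Hf a n) ∧ M2R (OPol a) (Hf a n) (Hf a n) ∧
    (∀ m, n ≤ m → XC (OPol a) (yw a m) (Ef a n)) ∧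
    (∀ m, n ≤ m → XC (OPol a) (yw a m) (Hf a n)) := by
  intro n
  induction n with
  | zero =>
    rw [HfEf0]
    exact ⟨dM1 a, dM2 a, dM1 a, dM2 a, fun m _ => dXC a _, fun m _ => dXC a _⟩
  | succ n ih =>
    obtain ⟨e1, e2, hh1, hh2, xe, xh⟩ := ih
    have hz : ∀ r : OPol a, (yw a n * yw a n) * r = r * (yw a n * yw a n) :=
      ywsq_comm n
    have hHneg := Hf_neg a n
    have pe1 := trans_right_M1 e1 hz hHneg
    have pe2 := trans_right_M2 e2 hz hHneg
    have ph1 := trans_left_M1 (trans_right_M1 hh1 hz hHneg) hz hHneg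
    have ph2 := trans_left_M2 (trans_right_M2 hh2 hz hHneg) hz hHneg
    have xph : ∀ m, n ≤ m → XC (OPol a) (yw a m) (Pz (Hf a n) (yw a n * yw a n)) :=
      fun m hm => xc_trans (xh m hm) ((hz (yw a m)).symm) hHneg
    refine ⟨?_, ?_, ?_, ?_, ?_, ?_⟩
    · rw [Ef_succ, Hf_succ]
      exact step_M1 pe1 pe2 (xe n le_rfl) (xph n le_rfl)
    · rw [Ef_succ, Hf_succ]
      exact step_M2 pe1 pe2 (xe n le_rfl) (xph n le_rfl)
    · rw [Hf_succ]
      exact step_M1 ph1 ph2 (xph n le_rfl) (xph n le_rfl)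
    · rw [Hf_succ]
      exact step_M2 ph1 ph2 (xph n le_rfl) (xph n le_rfl)
    · intro m hm
      rw [Ef_succ]
      exact xc_step (xe m (by omega)) (yw_anticomm (by omega))
    · intro m hm
      rw [Hf_succ]
      exact xc_step (xph m (by omega)) (yw_anticomm (by omega))

lemma Hf_rec (a n : ℕ) (i : ℤ) :
    Hf a (n+1) i = Hf a n i + yw a n * Hf a (n+1) (i - 1) := by
  have hz : ∀ r : OPol a, (yw a n * yw a n) * r = r * (yw a n * yw a n) := ywsq_comm n
  show Pz (Hf a n) _ i + yw a n * Pz (Hf a n) _ (i-1)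
      = Hf a n i + yw a n * (Pz (Hf a n) _ (i-1) + yw a n * Pz (Hf a n) _ (i-1-1))
  rw [Pz_rec (Hf_neg a n) i, show i - 1 - 1 = i - 2 by ring,
    ← hz (Pz (Hf a n) (yw a n * yw a n) (i-2))]
  noncomm_ring

lemma Hf_zero (a : ℕ) : ∀ n, Hf a n 0 = 1 := by
  intro n
  induction n with
  | zero => rfl
  | succ n ih =>
    show Pz (Hf a n) _ 0 + yw a n * Pz (Hf a n) _ (0 - 1) = 1
    rw [Pz_zero_eq, Pz_neg (by omega), mul_zero, add_zero, ih]

lemma yw_eq (a n : ℕ) (h : n < a) : yw a n = xt a ⟨a - n - 1, by omega⟩ := dif_pos h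

lemma Ef_bridge (a : ℕ) : ∀ n, n ≤ a → ∀ k : ℕ,
    Ef a n (k : ℤ) = ∑ t ∈ Finset.powersetCard k
      ((Finset.univ : Finset (Fin a)).filter (fun i => a - n ≤ i.val)),
        ((t.sort (· ≤ ·)).map (xt a)).prod := by
  intro n
  induction n with
  | zero =>
    intro _ k
    have hS : ((Finset.univ : Finset (Fin a)).filter (fun i => a - 0 ≤ i.val)) = ∅ := by
      apply Finset.filter_eq_empty_iff.mpr
      intro i _
      have := i.isLt
      omega
    rw [hS]
    cases k with
    | zero => simp; exact done' a
    | succ k =>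
      rw [Finset.powersetCard_eq_empty.mpr (by simp), Finset.sum_empty]
      exact dzero a _ (by omega)
  | succ n ih =>
    intro hna k
    have hn : n ≤ a := by omega
    set x : Fin a := ⟨a - n - 1, by omega⟩ with hxdef
    have hSx : ((Finset.univ : Finset (Fin a)).filter (fun i => a - (n+1) ≤ i.val))
        = insert x ((Finset.univ : Finset (Fin a)).filter (fun i => a - n ≤ i.val)) := by
      ext i
      simp only [Finset.mem_filter, Finset.mem_insert, Finset.mem_univ, true_and, hxdef,
        Fin.ext_iff]
      omega
    have hxS : x ∉ ((Finset.univ : Finset (Fin a)).filter (fun i => a - n ≤ i.val)) := by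
      simp only [Finset.mem_filter, Finset.mem_univ, true_and, hxdef]
      omega
    have hyw : yw a n = xt a x := yw_eq a n (by omega)
    cases k with
    | zero =>
      show Ef a n 0 + yw a n * Ef a n (0-1) = _
      rw [Ef_neg a n (0-1) (by omega), mul_zero, add_zero]
      rw [Finset.powersetCard_zero, Finset.sum_singleton]
      have := ih hn 0
      rw [Finset.powersetCard_zero, Finset.sum_singleton] at this
      exact this
    | succ k =>
      show Ef a n (((k:ℕ)+1 : ℕ) : ℤ) + yw a n * Ef a n ((((k:ℕ)+1 : ℕ) : ℤ) - 1) = _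
      have e1 : (((k:ℕ)+1 : ℕ) : ℤ) - 1 = (k : ℤ) := by push_cast; ring
      rw [e1, hSx, Finset.powersetCard_succ_insert hxS]
      rw [Finset.sum_union (by
        rw [Finset.disjoint_left]
        intro t ht ht'
        obtain ⟨hsub, _⟩ := Finset.mem_powersetCard.mp ht
        obtain ⟨t', _, rfl⟩ := Finset.mem_image.mp ht'
        exact hxS (hsub (Finset.mem_insert_self x t')))]
      rw [Finset.sum_image (by
        intro t1 h1 t2 h2 heq
        have hx1 : x ∉ t1 := fun hx => hxS ((Finset.mem_powersetCard.mp h1).1 hx)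
        have hx2 : x ∉ t2 := fun hx => hxS ((Finset.mem_powersetCard.mp h2).1 hx)
        rw [← Finset.erase_insert hx1, ← Finset.erase_insert hx2, heq])]
      rw [← ih hn (k+1)]
      congr 1
      have hterm : ∀ t ∈ Finset.powersetCard k
          ((Finset.univ : Finset (Fin a)).filter (fun i => a - n ≤ i.val)),
          (((insert x t).sort (· ≤ ·)).map (xt a)).prod
            = xt a x * ((t.sort (· ≤ ·)).map (xt a)).prod := by
        intro t ht
        obtain ⟨hsub, _⟩ := Finset.mem_powersetCard.mp ht
        have hxt : x ∉ t := fun hx => hxS (hsub hx)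
        have hle : ∀ b ∈ t, x ≤ b := by
          intro b hb
          have := (Finset.mem_filter.mp (hsub hb)).2
          rw [Fin.le_def]
          simp only [hxdef]
          omega
        rw [Finset.sort_insert _ hle hxt, List.map_cons, List.prod_cons]
      rw [Finset.sum_congr rfl hterm, ← Finset.mul_sum, hyw, ih hn k]

lemma symnil_univ (a : ℕ) : (Finset.univ : Finset (Sym (Fin a) 0)) = {Sym.nil} := by
  ext σ
  simp only [Finset.mem_univ, Finset.mem_singleton, true_iff]
  exact Sym.eq_nil_of_card_zero σ

lemma Hf_bridge_k0 (a n : ℕ) :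
    Hf a n ((0 : ℕ) : ℤ) = ∑ σ ∈ (Finset.univ : Finset (Sym (Fin a) 0)).filter
      (fun σ => ∀ i ∈ σ, a - n ≤ i.val),
        (((σ : Multiset (Fin a)).sort (· ≤ ·)).map (xt a)).prod := by
  rw [symnil_univ, Finset.filter_singleton,
    if_pos (fun i hi => absurd hi (Sym.notMem_nil i)), Finset.sum_singleton]
  rw [show ((0:ℕ):ℤ) = 0 by norm_num, Hf_zero]
  show (1 : OPol a) = ((Multiset.sort (0 : Multiset (Fin a)) (· ≤ ·)).map (xt a)).prod
  rw [Multiset.sort_zero]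
  simp

lemma Hf_bridge (a : ℕ) : ∀ n, n ≤ a → ∀ k : ℕ,
    Hf a n (k : ℤ) = ∑ σ ∈ (Finset.univ : Finset (Sym (Fin a) k)).filter
      (fun σ => ∀ i ∈ σ, a - n ≤ i.val),
        (((σ : Multiset (Fin a)).sort (· ≤ ·)).map (xt a)).prod := by
  intro n
  induction n with
  | zero =>
    intro _ k
    cases k with
    | zero => exact Hf_bridge_k0 a 0
    | succ k =>
      have hF : Finset.filter (fun σ : Sym (Fin a) (k+1) => ∀ i ∈ σ, a - 0 ≤ i.val)
          Finset.univ = ∅ := by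
        apply Finset.filter_eq_empty_iff.mpr
        intro σ _ hall
        obtain ⟨i, hi⟩ : ∃ i, i ∈ σ.val :=
          Multiset.exists_mem_of_ne_zero (by
            intro h0
            have hc := σ.2
            rw [h0] at hc
            simp at hc)
        have h1 := hall i hi
        have h2 := i.isLt
        omega
      rw [hF, Finset.sum_empty, HfEf0]
      exact dzero a _ (by omega)
  | succ n ih =>
    intro hna k
    have hn : n ≤ a := by omega
    set x : Fin a := ⟨a - n - 1, by omega⟩ with hxdef
    have hyw : yw a n = xt a x := yw_eq a n (by omega)
    induction k with
    | zero => exact Hf_bridge_k0 a (n+1)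
    | succ k ihk =>
      rw [Hf_rec, show ((k+1 : ℕ) : ℤ) - 1 = (k : ℤ) by push_cast; ring]
      rw [← Finset.sum_filter_add_sum_filter_not
        (Finset.filter (fun σ : Sym (Fin a) (k+1) => ∀ i ∈ σ, a - (n+1) ≤ i.val) Finset.univ)
        (fun σ => x ∈ σ), add_comm]
      congr 1
      · -- part with x
        rw [ihk, Finset.mul_sum, hyw]
        refine Finset.sum_bij (fun σ' _ => x ::ₛ σ') ?_ ?_ ?_ ?_
        · intro σ' hσ'
          simp only [Finset.mem_filter, Finset.mem_univ, true_and] at hσ' ⊢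
          refine ⟨fun i hi => ?_, Sym.mem_cons_self x σ'⟩
          rcases Sym.mem_cons.mp hi with rfl | hmem
          · simp only [hxdef]; omega
          · exact hσ' i hmem
        · intro σ1 h1 σ2 h2 heq
          exact (Sym.cons_inj_right x σ1 σ2).mp heq
        · intro σ hσ
          simp only [Finset.mem_filter, Finset.mem_univ, true_and] at hσ
          obtain ⟨hcond, hx⟩ := hσ
          refine ⟨σ.erase x hx, ?_, Sym.cons_erase hx⟩
          simp only [Finset.mem_filter, Finset.mem_univ, true_and]
          intro i hi
          have : i ∈ (σ : Multiset (Fin a)) := by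
            have hi' : i ∈ ((σ.erase x hx : Sym (Fin a) k) : Multiset (Fin a)) := hi
            rw [Sym.coe_erase] at hi'
            exact Multiset.mem_of_mem_erase hi'
          exact hcond i this
        · intro σ' hσ'
          simp only [Finset.mem_filter, Finset.mem_univ, true_and] at hσ'
          have hle : ∀ b ∈ (σ' : Multiset (Fin a)), x ≤ b := by
            intro b hb
            have := hσ' b hb
            rw [Fin.le_def]
            simp only [hxdef]
            omega
          rw [Sym.coe_cons, Multiset.sort_cons x _ _ hle, List.map_cons, List.prod_cons]
      · -- part without x
        rw [ih hn (k+1)]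
        apply Finset.sum_congr ?_ (fun _ _ => rfl)
        rw [Finset.filter_filter]
        ext σ
        simp only [Finset.mem_filter, Finset.mem_univ, true_and]
        constructor
        · intro h
          refine ⟨fun i hi => by have := h i hi; omega, fun hx => ?_⟩
          have := h x hx
          simp only [hxdef] at this
          omega
        · rintro ⟨h1, h2⟩ i hi
          have h3 := h1 i hi
          have hne : i ≠ x := fun he => h2 (he ▸ hi)
          have : i.val ≠ a - n - 1 := by
            intro hv
            exact hne (Fin.ext (by simp [hxdef, hv]))
          omega

lemma eps_eq (a k : ℕ) : eps a k = Ef a a (k : ℤ) := by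
  rw [Ef_bridge a a le_rfl k]
  unfold eps
  congr 1
  rw [Finset.filter_true_of_mem (fun i _ => by omega)]

lemma hp_eq (a k : ℕ) : hp a k = Hf a a (k : ℤ) := by
  rw [Hf_bridge a a le_rfl k]
  unfold hp
  rw [Finset.filter_true_of_mem (fun σ _ => fun i _ => by omega)]

/-- the odd complete symmetric polynomials satisfy the same relations as the
odd elementary ones, together with the mixed relations. -/
theorem odd_complete_symmetric_relations (a : ℕ) :
    (∀ i j : ℕ, 1 ≤ i → j ≤ a → Even (i + j) →
      hp a i * hp a j = hp a j * hp a i) ∧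
    (∀ i j : ℕ, 1 ≤ i → j + 1 ≤ a → Even (i + j) →
      hp a i * hp a (j + 1) + (-1 : OPol a) ^ i * (hp a (j + 1) * hp a i) =
        (-1 : OPol a) ^ i * (hp a (i + 1) * hp a j) + hp a j * hp a (i + 1)) ∧
    (∀ m : ℕ, 1 ≤ m → 2 * m + 1 ≤ a →
      hp a 1 * hp a (2 * m) + hp a (2 * m) * hp a 1 = 2 * hp a (2 * m + 1)) ∧
    (∀ i j : ℕ, 1 ≤ i → j ≤ a → Even (i + j) →
      eps a i * hp a j = hp a j * eps a i) ∧
    (∀ i j : ℕ, 1 ≤ i → j + 1 ≤ a → Even (i + j) →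
      eps a i * hp a (j + 1) + (-1 : OPol a) ^ i * (hp a (j + 1) * eps a i) =
        (-1 : OPol a) ^ i * (eps a (i + 1) * hp a j) + hp a j * eps a (i + 1)) := by
  obtain ⟨e1, e2, h1, h2, -, -⟩ := master a a
  have hev : ∀ {i j : ℕ}, Even (i + j) → Even ((i:ℤ) + (j:ℤ)) := by
    intro i j h
    have := (Int.even_coe_nat (i+j)).mpr h
    push_cast at this
    exact this
  refine ⟨?_, ?_, ?_, ?_, ?_⟩
  · intro i j _ _ hij
    rw [hp_eq, hp_eq]
    exact h1 _ _ (hev hij)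
  · intro i j _ _ hij
    have inst := h2 (i:ℤ) (j:ℤ) (hev hij)
    rw [hp_eq a i, hp_eq a (j+1), hp_eq a j, hp_eq a (i+1)]
    push_cast
    rw [← sgn_natCast]
    exact inst
  · intro m _ _
    have inst := h2 (0:ℤ) ((2*m : ℕ) : ℤ) (by
      rw [Int.even_iff]
      omega)
    rw [sgn_one (by omega : (0:ℤ) % 2 = 0), Hf_zero a a,
      show (0:ℤ) + 1 = 1 by norm_num, one_mul, one_mul, one_mul, mul_one] at inst
    rw [hp_eq a 1, hp_eq a (2*m), hp_eq a (2*m+1)]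
    push_cast at inst ⊢
    rw [two_mul (Hf a a (2*(m:ℤ)+1))]
    exact inst.symm
  · intro i j _ _ hij
    rw [eps_eq, hp_eq]
    exact e1 _ _ (hev hij)
  · intro i j _ _ hij
    have inst := e2 (i:ℤ) (j:ℤ) (hev hij)
    rw [eps_eq a i, hp_eq a (j+1), hp_eq a j, eps_eq a (i+1)]
    push_cast
    rw [← sgn_natCast]
    exact inst
end

section
/- Define the operators ∂̄_r := x_r∘∂_r (left multiplication by x_r composed with ∂_r) on OPol_a, for 1 ≤ r ≤ a−1. These generate a copy of the 0-Hecke algebra: ∂̄_r∘∂̄_r = ∂̄_r; ∂̄_r∘∂̄_{r+1}∘∂̄_r = ∂̄_{r+1}∘∂̄_r∘∂̄_{r+1} for 1 ≤ r ≤ a−2; and ∂̄_r∘∂̄_s = ∂̄_s∘∂̄_r whenever |r−s| > 1. -/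
open scoped BigOperators

section ZeroHeckeAux

variable {a : ℕ}

lemma opol_ind {P : OPol a → Prop} (hC : ∀ n : ℤ, P ((n : ℤ) : OPol a))
    (hX : ∀ i : Fin a, P (OX i)) (hA : ∀ f g, P f → P g → P (f + g))
    (hM : ∀ f g, P f → P g → P (f * g)) (f : OPol a) : P f := by
  obtain ⟨x, rfl⟩ := RingQuot.mkRingHom_surjective (OddRel a) f
  induction x with
  | grade0 r =>
    have : (RingQuot.mkRingHom (OddRel a)) (algebraMap ℤ _ r) = ((r : ℤ) : OPol a) := by
      exact map_intCast ((RingQuot.mkRingHom (OddRel a)).comp (algebraMap ℤ _)) r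
    rw [this]; exact hC r
  | grade1 i => exact hX i
  | mul x y hx hy => rw [map_mul]; exact hM _ _ hx hy
  | add x y hx hy => rw [map_add]; exact hA _ _ hx hy

lemma xv_eq (i : Fin a) : xv a ((i : ℕ) + 1) = OX i := by
  have h : 1 ≤ (i : ℕ) + 1 ∧ (i : ℕ) + 1 ≤ a := ⟨by omega, i.isLt⟩
  rw [xv, dif_pos h]
  congr 1

lemma ox_anticomm (i j : Fin a) (h : i ≠ j) : OX i * OX j = -(OX j * OX i) := by
  have := RingQuot.mkRingHom_rel (OddRel.anticomm i j h)
  simpa only [OX, map_mul, map_neg] using this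

lemma xv_anticomm (r t : ℕ) (h1 : 1 ≤ r) (h2 : r ≤ a) (h3 : 1 ≤ t) (h4 : t ≤ a)
    (hne : r ≠ t) : xv a r * xv a t = -(xv a t * xv a r) := by
  have hr : xv a r = OX ⟨r - 1, by omega⟩ := by
    rw [← xv_eq ⟨r - 1, by omega⟩]; congr 1; simp; omega
  have ht : xv a t = OX ⟨t - 1, by omega⟩ := by
    rw [← xv_eq ⟨t - 1, by omega⟩]; congr 1; simp; omega
  rw [hr, ht]
  exact ox_anticomm _ _ (by simp [Fin.ext_iff]; omega)

variable (d : ℕ → OPol a →+ OPol a)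

lemma d_intCast (i : ℕ) (hd1 : d i 1 = 0) (n : ℤ) : d i ((n : ℤ) : OPol a) = 0 := by
  rw [show ((n : ℤ) : OPol a) = n • (1 : OPol a) by rw [zsmul_one], map_zsmul, hd1, zsmul_zero]

lemma oneg_mul (x y : OPol a) : -x * y = -(x * y) := neg_mul x y
lemma omul_neg (x y : OPol a) : x * -y = -(x * y) := mul_neg x y
lemma oadd_mul (x y z : OPol a) : (x + y) * z = x * z + y * z := add_mul x y z
lemma omul_add (x y z : OPol a) : x * (y + z) = x * y + x * z := mul_add x y z
lemma omul_assoc (x y z : OPol a) : x * y * z = x * (y * z) := mul_assoc x y z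
lemma ozero_mul (x : OPol a) : (0 : OPol a) * x = 0 := zero_mul x
lemma omul_zero (x : OPol a) : x * (0 : OPol a) = 0 := mul_zero x
lemma oone_mul (x : OPol a) : (1 : OPol a) * x = x := one_mul x
lemma omul_one (x : OPol a) : x * (1 : OPol a) = x := mul_one x

end ZeroHeckeAux
section ZeroHeckeAux2

variable {a : ℕ}

abbrev HS (a : ℕ) (s : ℕ → OPol a →+* OPol a) : Prop :=
  ∀ i j : ℕ, 1 ≤ i → i + 1 ≤ a → 1 ≤ j → j ≤ a →
    s i (xv a j) =
      if j = i then -xv a (i + 1) else if j = i + 1 then -xv a i else -xv a j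

abbrev HDX (a : ℕ) (d : ℕ → OPol a →+ OPol a) : Prop :=
  ∀ i j : ℕ, 1 ≤ i → i + 1 ≤ a → 1 ≤ j → j ≤ a →
    d i (xv a j) = if j = i ∨ j = i + 1 then 1 else 0

abbrev HD1 (a : ℕ) (d : ℕ → OPol a →+ OPol a) : Prop :=
  ∀ i : ℕ, 1 ≤ i → i + 1 ≤ a → d i 1 = 0

abbrev HDL (a : ℕ) (s : ℕ → OPol a →+* OPol a) (d : ℕ → OPol a →+ OPol a) : Prop :=
  ∀ i : ℕ, 1 ≤ i → i + 1 ≤ a → ∀ f g : OPol a,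
    d i (f * g) = d i f * g + s i f * d i g

variable {s : ℕ → OPol a →+* OPol a} {d : ℕ → OPol a →+ OPol a}

lemma sx_lo (hs : HS a s) {i : ℕ} (h1 : 1 ≤ i) (h2 : i + 1 ≤ a) :
    s i (xv a i) = -xv a (i + 1) := by
  have := hs i i h1 h2 h1 (by omega)
  rwa [if_pos rfl] at this

lemma sx_hi (hs : HS a s) {i : ℕ} (h1 : 1 ≤ i) (h2 : i + 1 ≤ a) :
    s i (xv a (i + 1)) = -xv a i := by
  have := hs i (i + 1) h1 h2 (by omega) h2
  rwa [if_neg (by omega), if_pos rfl] at this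

lemma sx_out (hs : HS a s) {i j : ℕ} (h1 : 1 ≤ i) (h2 : i + 1 ≤ a) (h3 : 1 ≤ j)
    (h4 : j ≤ a) (e1 : j ≠ i) (e2 : j ≠ i + 1) : s i (xv a j) = -xv a j := by
  have := hs i j h1 h2 h3 h4
  rwa [if_neg e1, if_neg e2] at this

lemma dx_in (hdx : HDX a d) {i j : ℕ} (h1 : 1 ≤ i) (h2 : i + 1 ≤ a) (h3 : 1 ≤ j)
    (h4 : j ≤ a) (e : j = i ∨ j = i + 1) : d i (xv a j) = 1 := by
  have := hdx i j h1 h2 h3 h4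
  rwa [if_pos e] at this

lemma dx_out (hdx : HDX a d) {i j : ℕ} (h1 : 1 ≤ i) (h2 : i + 1 ≤ a) (h3 : 1 ≤ j)
    (h4 : j ≤ a) (e : ¬(j = i ∨ j = i + 1)) : d i (xv a j) = 0 := by
  have := hdx i j h1 h2 h3 h4
  rwa [if_neg e] at this

lemma dx01 (hdx : HDX a d) {i j : ℕ} (h1 : 1 ≤ i) (h2 : i + 1 ≤ a) (h3 : 1 ≤ j)
    (h4 : j ≤ a) : d i (xv a j) = 1 ∨ d i (xv a j) = 0 := by
  by_cases e : j = i ∨ j = i + 1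
  · exact Or.inl (dx_in hdx h1 h2 h3 h4 e)
  · exact Or.inr (dx_out hdx h1 h2 h3 h4 e)

lemma s_01 (i : ℕ) {x : OPol a} (h : x = 1 ∨ x = 0) : s i x = x := by
  rcases h with h | h <;> rw [h] <;> simp

lemma d_01 (hd1 : HD1 a d) {i : ℕ} (h1 : 1 ≤ i) (h2 : i + 1 ≤ a) {x : OPol a}
    (h : x = 1 ∨ x = 0) : d i x = 0 := by
  rcases h with h | h <;> rw [h]
  · exact hd1 i h1 h2
  · exact map_zero _

end ZeroHeckeAux2
section ZeroHeckeAux3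

variable {a : ℕ} {s : ℕ → OPol a →+* OPol a} {d : ℕ → OPol a →+ OPol a}

lemma ss_id (hs : HS a s) {i : ℕ} (h1 : 1 ≤ i) (h2 : i + 1 ≤ a) (f : OPol a) :
    s i (s i f) = f := by
  induction f using opol_ind with
  | hC n => rw [map_intCast, map_intCast]
  | hA f g hf hg => rw [map_add, map_add, hf, hg]
  | hM f g hf hg => rw [map_mul, map_mul, hf, hg]
  | hX j =>
    rw [← xv_eq j]
    have h3 : 1 ≤ (j : ℕ) + 1 := by omega
    have h4 : (j : ℕ) + 1 ≤ a := j.isLt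
    by_cases e1 : (j : ℕ) + 1 = i
    · rw [e1, sx_lo hs h1 h2, map_neg, sx_hi hs h1 h2, neg_neg]
    · by_cases e2 : (j : ℕ) + 1 = i + 1
      · rw [e2, sx_hi hs h1 h2, map_neg, sx_lo hs h1 h2, neg_neg]
      · rw [sx_out hs h1 h2 h3 h4 e1 e2, map_neg, sx_out hs h1 h2 h3 h4 e1 e2, neg_neg]

lemma ds_anti (hs : HS a s) (hd1 : HD1 a d) (hdx : HDX a d) (hdL : HDL a s d)
    {i : ℕ} (h1 : 1 ≤ i) (h2 : i + 1 ≤ a) (f : OPol a) :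
    d i (s i f) = -(s i (d i f)) := by
  induction f using opol_ind with
  | hC n =>
    rw [map_intCast, d_intCast d i (hd1 i h1 h2) n, map_zero, neg_zero]
  | hA f g hf hg => simp only [map_add, hf, hg, neg_add]
  | hM f g hf hg =>
    rw [map_mul, hdL i h1 h2 (s i f) (s i g), hf, hg, ss_id hs h1 h2 f,
      hdL i h1 h2 f g, map_add, map_mul, map_mul, ss_id hs h1 h2 f]
    simp only [oneg_mul, omul_neg, neg_add]
  | hX j =>
    rw [← xv_eq j]
    have h3 : 1 ≤ (j : ℕ) + 1 := by omega
    have h4 : (j : ℕ) + 1 ≤ a := j.isLt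
    by_cases e1 : (j : ℕ) + 1 = i
    · rw [e1, sx_lo hs h1 h2, map_neg, dx_in hdx h1 h2 (by omega) h2 (Or.inr rfl),
        dx_in hdx h1 h2 h1 (by omega) (Or.inl rfl), map_one]
    · by_cases e2 : (j : ℕ) + 1 = i + 1
      · rw [e2, sx_hi hs h1 h2, map_neg, dx_in hdx h1 h2 h1 (by omega) (Or.inl rfl),
          dx_in hdx h1 h2 (by omega) h2 (Or.inr rfl), map_one]
      · rw [sx_out hs h1 h2 h3 h4 e1 e2, map_neg,
          dx_out hdx h1 h2 h3 h4 (by omega)]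
        simp

lemma dd_zero (hs : HS a s) (hd1 : HD1 a d) (hdx : HDX a d) (hdL : HDL a s d)
    {i : ℕ} (h1 : 1 ≤ i) (h2 : i + 1 ≤ a) (f : OPol a) :
    d i (d i f) = 0 := by
  induction f using opol_ind with
  | hC n => rw [d_intCast d i (hd1 i h1 h2) n, map_zero]
  | hA f g hf hg => rw [map_add, map_add, hf, hg, add_zero]
  | hM f g hf hg =>
    rw [hdL i h1 h2 f g, map_add, hdL i h1 h2 (d i f) g, hdL i h1 h2 (s i f) (d i g),
      hf, hg, ds_anti hs hd1 hdx hdL h1 h2 f]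
    simp only [ozero_mul, omul_zero, add_zero, zero_add, oneg_mul]
    abel
  | hX j =>
    rw [← xv_eq j]
    exact (map_zero (d i)) ▸
      (d_01 hd1 h1 h2 (dx01 hdx h1 h2 (by omega) j.isLt))

end ZeroHeckeAux3
section ZeroHeckeAux4

variable {a : ℕ} {s : ℕ → OPol a →+* OPol a} {d : ℕ → OPol a →+ OPol a}

lemma sx_perm (hs : HS a s) {i j : ℕ} (h1 : 1 ≤ i) (h2 : i + 1 ≤ a) (h3 : 1 ≤ j)
    (h4 : j ≤ a) :
    s i (xv a j) = -xv a (if j = i then i + 1 else if j = i + 1 then i else j) := by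
  split_ifs with e1 e2
  · rw [e1, sx_lo hs h1 h2]
  · rw [e2, sx_hi hs h1 h2]
  · exact sx_out hs h1 h2 h3 h4 e1 e2

lemma ss_comm (hs : HS a s) {r t : ℕ} (hr1 : 1 ≤ r) (hr2 : r + 1 ≤ a)
    (ht1 : 1 ≤ t) (ht2 : t + 1 ≤ a) (hfar : r + 1 < t ∨ t + 1 < r) (f : OPol a) :
    s r (s t f) = s t (s r f) := by
  induction f using opol_ind with
  | hC n => simp only [map_intCast]
  | hA f g hf hg => simp only [map_add, hf, hg]
  | hM f g hf hg => simp only [map_mul, hf, hg]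
  | hX j =>
    rw [← xv_eq j,
      sx_perm hs ht1 ht2 (by omega) j.isLt, map_neg,
      sx_perm hs hr1 hr2 (by split_ifs <;> omega) (by split_ifs <;> omega),
      sx_perm hs hr1 hr2 (by omega) j.isLt, map_neg,
      sx_perm hs ht1 ht2 (by split_ifs <;> omega) (by split_ifs <;> omega),
      neg_neg, neg_neg]
    congr 1
    split_ifs <;> omega

lemma sd_far (hs : HS a s) (hd1 : HD1 a d) (hdx : HDX a d) (hdL : HDL a s d)
    {r t : ℕ} (hr1 : 1 ≤ r) (hr2 : r + 1 ≤ a)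
    (ht1 : 1 ≤ t) (ht2 : t + 1 ≤ a) (hfar : r + 1 < t ∨ t + 1 < r) (f : OPol a) :
    s r (d t f) = -(d t (s r f)) := by
  induction f using opol_ind with
  | hC n =>
    rw [d_intCast d t (hd1 t ht1 ht2), map_zero, map_intCast,
      d_intCast d t (hd1 t ht1 ht2), neg_zero]
  | hA f g hf hg => simp only [map_add, hf, hg, neg_add]
  | hM f g hf hg =>
    simp only [hdL t ht1 ht2, map_add, map_mul, hf, hg,
      ss_comm hs hr1 hr2 ht1 ht2 hfar, oneg_mul, omul_neg, neg_add]
  | hX j =>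
    rw [← xv_eq j]
    by_cases e : (j : ℕ) + 1 = t ∨ (j : ℕ) + 1 = t + 1
    · rw [dx_in hdx ht1 ht2 (by omega) j.isLt e, map_one,
        sx_perm hs hr1 hr2 (by omega) j.isLt, map_neg,
        dx_in hdx ht1 ht2 (by split_ifs <;> omega) (by split_ifs <;> omega)
          (by split_ifs <;> omega), neg_neg]
    · rw [dx_out hdx ht1 ht2 (by omega) j.isLt e, map_zero,
        sx_perm hs hr1 hr2 (by omega) j.isLt, map_neg,
        dx_out hdx ht1 ht2 (by split_ifs <;> omega) (by split_ifs <;> omega)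
          (by split_ifs <;> omega)]
      simp

lemma sd_far' (hs : HS a s) (hd1 : HD1 a d) (hdx : HDX a d) (hdL : HDL a s d)
    {r t : ℕ} (hr1 : 1 ≤ r) (hr2 : r + 1 ≤ a)
    (ht1 : 1 ≤ t) (ht2 : t + 1 ≤ a) (hfar : r + 1 < t ∨ t + 1 < r) (f : OPol a) :
    d t (s r f) = -(s r (d t f)) := by
  rw [sd_far hs hd1 hdx hdL hr1 hr2 ht1 ht2 hfar, neg_neg]

lemma dd_far (hs : HS a s) (hd1 : HD1 a d) (hdx : HDX a d) (hdL : HDL a s d)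
    {r t : ℕ} (hr1 : 1 ≤ r) (hr2 : r + 1 ≤ a)
    (ht1 : 1 ≤ t) (ht2 : t + 1 ≤ a) (hfar : r + 1 < t ∨ t + 1 < r) (f : OPol a) :
    d r (d t f) = -(d t (d r f)) := by
  have hfar' : t + 1 < r ∨ r + 1 < t := hfar.symm
  induction f using opol_ind with
  | hC n =>
    rw [d_intCast d t (hd1 t ht1 ht2), map_zero, d_intCast d r (hd1 r hr1 hr2),
      map_zero, neg_zero]
  | hA f g hf hg => simp only [map_add, hf, hg, neg_add]
  | hM f g hf hg =>
    simp only [hdL t ht1 ht2, hdL r hr1 hr2, map_add, hf, hg,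
      sd_far hs hd1 hdx hdL hr1 hr2 ht1 ht2 hfar,
      sd_far hs hd1 hdx hdL ht1 ht2 hr1 hr2 hfar',
      ss_comm hs hr1 hr2 ht1 ht2 hfar, oneg_mul, omul_neg, neg_add, neg_neg]
    abel
  | hX j =>
    rw [← xv_eq j, d_01 hd1 hr1 hr2 (dx01 hdx ht1 ht2 (by omega) j.isLt),
      d_01 hd1 ht1 ht2 (dx01 hdx hr1 hr2 (by omega) j.isLt), neg_zero]

end ZeroHeckeAux4
section ZeroHeckeAux5

variable {a : ℕ} {s : ℕ → OPol a →+* OPol a} {d : ℕ → OPol a →+ OPol a}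

lemma sx_perm_neg (hs : HS a s) {i j : ℕ} (h1 : 1 ≤ i) (h2 : i + 1 ≤ a) (h3 : 1 ≤ j)
    (h4 : j ≤ a) :
    s i (-xv a j) = xv a (if j = i then i + 1 else if j = i + 1 then i else j) := by
  rw [map_neg, sx_perm hs h1 h2 h3 h4, neg_neg]

set_option maxHeartbeats 1600000 in
lemma sss_braid (hs : HS a s) {r : ℕ} (hr1 : 1 ≤ r) (hr3 : r + 2 ≤ a) (f : OPol a) :
    s r (s (r + 1) (s r f)) = s (r + 1) (s r (s (r + 1) f)) := by
  have hr2 : r + 1 ≤ a := by omega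
  have hq1 : 1 ≤ r + 1 := by omega
  have hq2 : r + 1 + 1 ≤ a := by omega
  induction f using opol_ind with
  | hC n => simp only [map_intCast]
  | hA f g hf hg => simp only [map_add, hf, hg]
  | hM f g hf hg => simp only [map_mul, hf, hg]
  | hX j =>
    rw [← xv_eq j,
      sx_perm hs hr1 hr2 (by omega) j.isLt,
      sx_perm_neg hs hq1 hq2 (by split_ifs <;> omega) (by split_ifs <;> omega),
      sx_perm hs hr1 hr2 (by split_ifs <;> omega) (by split_ifs <;> omega),
      sx_perm hs hq1 hq2 (by omega) j.isLt,
      sx_perm_neg hs hr1 hr2 (by split_ifs <;> omega) (by split_ifs <;> omega),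
      sx_perm hs hq1 hq2 (by split_ifs <;> omega) (by split_ifs <;> omega)]
    congr 1
    congr 1
    split_ifs <;> omega

lemma std_iii (hs : HS a s) (hd1 : HD1 a d) (hdx : HDX a d) (hdL : HDL a s d)
    {r : ℕ} (hr1 : 1 ≤ r) (hr3 : r + 2 ≤ a) (f : OPol a) :
    s r (s (r + 1) (d r f)) = d (r + 1) (s r (s (r + 1) f)) := by
  have hr2 : r + 1 ≤ a := by omega
  have hq1 : 1 ≤ r + 1 := by omega
  have hq2 : r + 1 + 1 ≤ a := by omega
  induction f using opol_ind with
  | hC n =>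
    simp only [map_intCast, d_intCast d r (hd1 r hr1 hr2),
      d_intCast d (r + 1) (hd1 (r + 1) hq1 hq2), map_zero]
  | hA f g hf hg => simp only [map_add, hf, hg]
  | hM f g hf hg =>
    simp only [map_mul, hdL r hr1 hr2, hdL (r + 1) hq1 hq2, map_add, hf, hg,
      sss_braid hs hr1 hr3]
  | hX j =>
    rw [← xv_eq j,
      sx_perm hs hq1 hq2 (by omega) j.isLt,
      sx_perm_neg hs hr1 hr2 (by split_ifs <;> omega) (by split_ifs <;> omega)]
    by_cases e : (j : ℕ) + 1 = r ∨ (j : ℕ) + 1 = r + 1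
    · rw [dx_in hdx hr1 hr2 (by omega) j.isLt e, map_one, map_one,
        dx_in hdx hq1 hq2 (by split_ifs <;> omega) (by split_ifs <;> omega)
          (by split_ifs <;> omega)]
    · rw [dx_out hdx hr1 hr2 (by omega) j.isLt e, map_zero, map_zero,
        dx_out hdx hq1 hq2 (by split_ifs <;> omega) (by split_ifs <;> omega)
          (by split_ifs <;> omega)]

lemma dts_iv (hs : HS a s) (hd1 : HD1 a d) (hdx : HDX a d) (hdL : HDL a s d)
    {r : ℕ} (hr1 : 1 ≤ r) (hr3 : r + 2 ≤ a) (f : OPol a) :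
    d r (s (r + 1) (s r f)) = s (r + 1) (s r (d (r + 1) f)) := by
  have hr2 : r + 1 ≤ a := by omega
  have hq1 : 1 ≤ r + 1 := by omega
  have hq2 : r + 1 + 1 ≤ a := by omega
  induction f using opol_ind with
  | hC n =>
    simp only [map_intCast, d_intCast d r (hd1 r hr1 hr2),
      d_intCast d (r + 1) (hd1 (r + 1) hq1 hq2), map_zero]
  | hA f g hf hg => simp only [map_add, hf, hg]
  | hM f g hf hg =>
    simp only [map_mul, hdL r hr1 hr2, hdL (r + 1) hq1 hq2, map_add, hf, hg,
      sss_braid hs hr1 hr3]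
  | hX j =>
    rw [← xv_eq j,
      sx_perm hs hr1 hr2 (by omega) j.isLt,
      sx_perm_neg hs hq1 hq2 (by split_ifs <;> omega) (by split_ifs <;> omega)]
    by_cases e : (j : ℕ) + 1 = r + 1 ∨ (j : ℕ) + 1 = r + 1 + 1
    · rw [dx_in hdx hq1 hq2 (by omega) j.isLt e, map_one, map_one,
        dx_in hdx hr1 hr2 (by split_ifs <;> omega) (by split_ifs <;> omega)
          (by split_ifs <;> omega)]
    · rw [dx_out hdx hq1 hq2 (by omega) j.isLt e, map_zero, map_zero,
        dx_out hdx hr1 hr2 (by split_ifs <;> omega) (by split_ifs <;> omega)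
          (by split_ifs <;> omega)]

end ZeroHeckeAux5
section ZeroHeckeAux6

variable {a : ℕ} {s : ℕ → OPol a →+* OPol a} {d : ℕ → OPol a →+ OPol a}

lemma qsq_i (hs : HS a s) (hd1 : HD1 a d) (hdx : HDX a d) (hdL : HDL a s d)
    {r : ℕ} (hr1 : 1 ≤ r) (hr3 : r + 2 ≤ a) (f : OPol a) :
    d (r + 1) (s r (d (r + 1) f)) =
      s r (d (r + 1) (d r f)) + d r (d (r + 1) (s r f)) := by
  have hr2 : r + 1 ≤ a := by omega
  have hq1 : 1 ≤ r + 1 := by omega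
  have hq2 : r + 1 + 1 ≤ a := by omega
  induction f using opol_ind with
  | hC n =>
    simp only [map_intCast, d_intCast d r (hd1 r hr1 hr2),
      d_intCast d (r + 1) (hd1 (r + 1) hq1 hq2), map_zero, add_zero]
  | hA f g hf hg =>
    simp only [map_add, hf, hg]
    abel
  | hM f g hf hg =>
    simp only [map_mul, hdL r hr1 hr2, hdL (r + 1) hq1 hq2, map_add, hf, hg,
      ds_anti hs hd1 hdx hdL hr1 hr2,
      sss_braid hs hr1 hr3, std_iii hs hd1 hdx hdL hr1 hr3,
      dts_iv hs hd1 hdx hdL hr1 hr3,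
      oneg_mul, omul_neg, neg_add, oadd_mul, omul_add]
    abel
  | hX j =>
    rw [← xv_eq j,
      s_01 r (dx01 hdx hq1 hq2 (by omega) j.isLt),
      d_01 hd1 hq1 hq2 (dx01 hdx hq1 hq2 (by omega) j.isLt),
      d_01 hd1 hq1 hq2 (dx01 hdx hr1 hr2 (by omega) j.isLt), map_zero,
      sx_perm hs hr1 hr2 (by omega) j.isLt, map_neg, map_neg,
      d_01 hd1 hr1 hr2
        (dx01 hdx hq1 hq2 (by split_ifs <;> omega) (by split_ifs <;> omega))]
    simp

lemma ptp_ii (hs : HS a s) (hd1 : HD1 a d) (hdx : HDX a d) (hdL : HDL a s d)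
    {r : ℕ} (hr1 : 1 ≤ r) (hr3 : r + 2 ≤ a) (f : OPol a) :
    d r (s (r + 1) (d r f)) =
      s (r + 1) (d r (d (r + 1) f)) + d (r + 1) (d r (s (r + 1) f)) := by
  have hr2 : r + 1 ≤ a := by omega
  have hq1 : 1 ≤ r + 1 := by omega
  have hq2 : r + 1 + 1 ≤ a := by omega
  induction f using opol_ind with
  | hC n =>
    simp only [map_intCast, d_intCast d r (hd1 r hr1 hr2),
      d_intCast d (r + 1) (hd1 (r + 1) hq1 hq2), map_zero, add_zero]
  | hA f g hf hg =>
    simp only [map_add, hf, hg]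
    abel
  | hM f g hf hg =>
    simp only [map_mul, hdL r hr1 hr2, hdL (r + 1) hq1 hq2, map_add, hf, hg,
      ds_anti hs hd1 hdx hdL hq1 hq2,
      sss_braid hs hr1 hr3, std_iii hs hd1 hdx hdL hr1 hr3,
      dts_iv hs hd1 hdx hdL hr1 hr3,
      oneg_mul, omul_neg, neg_add, oadd_mul, omul_add]
    abel
  | hX j =>
    rw [← xv_eq j,
      s_01 (r + 1) (dx01 hdx hr1 hr2 (by omega) j.isLt),
      d_01 hd1 hr1 hr2 (dx01 hdx hr1 hr2 (by omega) j.isLt),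
      d_01 hd1 hr1 hr2 (dx01 hdx hq1 hq2 (by omega) j.isLt), map_zero,
      sx_perm hs hq1 hq2 (by omega) j.isLt, map_neg, map_neg,
      d_01 hd1 hq1 hq2
        (dx01 hdx hr1 hr2 (by split_ifs <;> omega) (by split_ifs <;> omega))]
    simp

lemma braid_d (hs : HS a s) (hd1 : HD1 a d) (hdx : HDX a d) (hdL : HDL a s d)
    {r : ℕ} (hr1 : 1 ≤ r) (hr3 : r + 2 ≤ a) (f : OPol a) :
    d r (d (r + 1) (d r f)) = d (r + 1) (d r (d (r + 1) f)) := by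
  have hr2 : r + 1 ≤ a := by omega
  have hq1 : 1 ≤ r + 1 := by omega
  have hq2 : r + 1 + 1 ≤ a := by omega
  induction f using opol_ind with
  | hC n =>
    simp only [d_intCast d r (hd1 r hr1 hr2),
      d_intCast d (r + 1) (hd1 (r + 1) hq1 hq2), map_zero]
  | hA f g hf hg => simp only [map_add, hf, hg]
  | hM f g hf hg =>
    simp only [map_mul, hdL r hr1 hr2, hdL (r + 1) hq1 hq2, map_add, hf, hg,
      dd_zero hs hd1 hdx hdL hr1 hr2, dd_zero hs hd1 hdx hdL hq1 hq2,
      qsq_i hs hd1 hdx hdL hr1 hr3, ptp_ii hs hd1 hdx hdL hr1 hr3,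
      sss_braid hs hr1 hr3, std_iii hs hd1 hdx hdL hr1 hr3,
      dts_iv hs hd1 hdx hdL hr1 hr3,
      oneg_mul, omul_neg, neg_add, oadd_mul, omul_add, ozero_mul, omul_zero,
      add_zero, zero_add]
    abel
  | hX j =>
    rw [← xv_eq j,
      d_01 hd1 hq1 hq2 (dx01 hdx hr1 hr2 (by omega) j.isLt), map_zero,
      d_01 hd1 hr1 hr2 (dx01 hdx hq1 hq2 (by omega) j.isLt), map_zero]

end ZeroHeckeAux6
/-- the operators ∂̄_r = x_r∘∂_r satisfy the 0-Hecke relations. -/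
theorem zero_hecke_relations (a : ℕ)
    (s : ℕ → OPol a →+* OPol a)
    (hs : ∀ i j : ℕ, 1 ≤ i → i + 1 ≤ a → 1 ≤ j → j ≤ a →
      s i (xv a j) =
        if j = i then -xv a (i + 1) else if j = i + 1 then -xv a i else -xv a j)
    (d : ℕ → OPol a →+ OPol a)
    (hd1 : ∀ i : ℕ, 1 ≤ i → i + 1 ≤ a → d i 1 = 0)
    (hdx : ∀ i j : ℕ, 1 ≤ i → i + 1 ≤ a → 1 ≤ j → j ≤ a →
      d i (xv a j) = if j = i ∨ j = i + 1 then 1 else 0)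
    (hdL : ∀ i : ℕ, 1 ≤ i → i + 1 ≤ a → ∀ f g : OPol a,
      d i (f * g) = d i f * g + s i f * d i g) :
    (∀ r : ℕ, 1 ≤ r → r + 1 ≤ a → ∀ f : OPol a,
      dbar a d r (dbar a d r f) = dbar a d r f) ∧
    (∀ r : ℕ, 1 ≤ r → r + 2 ≤ a → ∀ f : OPol a,
      dbar a d r (dbar a d (r + 1) (dbar a d r f)) =
        dbar a d (r + 1) (dbar a d r (dbar a d (r + 1) f))) ∧
    (∀ r t : ℕ, 1 ≤ r → r + 1 ≤ a → 1 ≤ t → t + 1 ≤ a → (r + 1 < t ∨ t + 1 < r) →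
      ∀ f : OPol a, dbar a d r (dbar a d t f) = dbar a d t (dbar a d r f)) := by
  have dbap : ∀ i (g : OPol a), dbar a d i g = xv a i * d i g := fun i g => rfl
  refine ⟨?_, ?_, ?_⟩
  · intro r h1 h2 f
    rw [dbap, dbap, hdL r h1 h2, dx_in hdx h1 h2 h1 (by omega) (Or.inl rfl),
      dd_zero hs hd1 hdx hdL h1 h2, oone_mul, omul_zero, add_zero]
  · intro r h1 h2 f
    have hr2 : r + 1 ≤ a := by omega
    have hq1 : 1 ≤ r + 1 := by omega
    have hq2 : r + 1 + 1 ≤ a := by omega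
    have hpX : d r (xv a r) = 1 := dx_in hdx h1 hr2 h1 (by omega) (Or.inl rfl)
    have hpY : d r (xv a (r + 1)) = 1 := dx_in hdx h1 hr2 hq1 hr2 (Or.inr rfl)
    have hqX : d (r + 1) (xv a r) = 0 := dx_out hdx hq1 hq2 h1 (by omega) (by omega)
    have hqY : d (r + 1) (xv a (r + 1)) = 1 := dx_in hdx hq1 hq2 hq1 hr2 (Or.inl rfl)
    have hsX : s r (xv a r) = -xv a (r + 1) := sx_lo hs h1 hr2
    have hsY : s r (xv a (r + 1)) = -xv a r := sx_hi hs h1 hr2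
    have htX : s (r + 1) (xv a r) = -xv a r :=
      sx_out hs hq1 hq2 h1 (by omega) (by omega) (by omega)
    have htY : s (r + 1) (xv a (r + 1)) = -xv a (r + 1 + 1) := sx_lo hs hq1 hq2
    have hyx : ∀ M : OPol a,
        xv a (r + 1) * (xv a r * M) = -(xv a r * (xv a (r + 1) * M)) := by
      intro M
      rw [← omul_assoc, xv_anticomm (r + 1) r hq1 hr2 h1 (by omega) (by omega),
        oneg_mul, omul_assoc]
    simp only [dbap, hdL r h1 hr2, hdL (r + 1) hq1 hq2,
      dd_zero hs hd1 hdx hdL h1 hr2, dd_zero hs hd1 hdx hdL hq1 hq2,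
      braid_d hs hd1 hdx hdL h1 h2,
      hpX, hpY, hqX, hqY, hsX, hsY, htX, htY, map_add, map_neg,
      omul_add, oadd_mul, oneg_mul, omul_neg, neg_neg, neg_add,
      ozero_mul, omul_zero, oone_mul, add_zero, zero_add, hyx]
    try abel
  · intro r t hr1 hr2 ht1 ht2 hfar f
    have hprt : d r (xv a t) = 0 := dx_out hdx hr1 hr2 ht1 (by omega) (by omega)
    have hptr : d t (xv a r) = 0 := dx_out hdx ht1 ht2 hr1 (by omega) (by omega)
    have hsrt : s r (xv a t) = -xv a t :=
      sx_out hs hr1 hr2 ht1 (by omega) (by omega) (by omega)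
    have hstr : s t (xv a r) = -xv a r :=
      sx_out hs ht1 ht2 hr1 (by omega) (by omega) (by omega)
    have hswap : ∀ M : OPol a, xv a t * (xv a r * M) = -(xv a r * (xv a t * M)) := by
      intro M
      rw [← omul_assoc, xv_anticomm t r ht1 (by omega) hr1 (by omega) (by omega),
        oneg_mul, omul_assoc]
    simp only [dbap, hdL r hr1 hr2, hdL t ht1 ht2,
      dd_far hs hd1 hdx hdL hr1 hr2 ht1 ht2 hfar,
      hprt, hptr, hsrt, hstr, map_add, map_neg,
      omul_add, oadd_mul, oneg_mul, omul_neg, neg_neg, neg_add,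
      ozero_mul, omul_zero, oone_mul, add_zero, zero_add, hswap]
    try abel
end
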